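/- The constant term of the Laurent polynomial (2 + y₁ + y₁^{−1} + y₂ + y₂^{−1} + y₁y₂ + y₁^{−1}y₂^{−1})^n equals the n-th Franel number Σ_{k=0}^{n} C(n,k)³. -/

import Mathlib

open AddMonoidAlgebra Finset

/-- The SU(3) adjoint character after the substitution `y₁ = z₁²/z₂`, `y₂ = z₂²/z₁`:
`2 + y₁ + y₁⁻¹ + y₂ + y₂⁻¹ + y₁y₂ + y₁⁻¹y₂⁻¹`. -/
noncomputable def chiY : AddMonoidAlgebra ℤ (ℤ × ℤ) :=
  AddMonoidAlgebra.single (0, 0) 2 + AddMonoidAlgebra.single (1, 0) 1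
  + AddMonoidAlgebra.single (-1, 0) 1 + AddMonoidAlgebra.single (0, 1) 1
  + AddMonoidAlgebra.single (0, -1) 1 + AddMonoidAlgebra.single (1, 1) 1
  + AddMonoidAlgebra.single (-1, -1) 1

lemma pow_expand (g : ℤ×ℤ) (n : ℕ) :
    (AddMonoidAlgebra.single ((0:ℤ),(0:ℤ)) (1:ℤ) + AddMonoidAlgebra.single g 1)^n
    = ∑ k ∈ range (n+1), AddMonoidAlgebra.single (k • g) (n.choose k : ℤ) := by
  have h1 : AddMonoidAlgebra.single ((0:ℤ),(0:ℤ)) (1:ℤ) = 1 := rfl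
  rw [h1, add_comm, add_pow]
  refine Finset.sum_congr rfl fun k _ => ?_
  rw [one_pow, mul_one, AddMonoidAlgebra.single_pow, one_pow]
  rw [show ((n.choose k : ℕ) : AddMonoidAlgebra ℤ (ℤ×ℤ)) = AddMonoidAlgebra.single (0,0) (n.choose k : ℤ) from rfl]
  rw [AddMonoidAlgebra.single_mul_single, one_mul]
  norm_num
  simp only [Prod.mk_zero_zero, add_zero]

lemma chiY_factor : chiY =
    (AddMonoidAlgebra.single ((0:ℤ),(0:ℤ)) (1:ℤ) + AddMonoidAlgebra.single (-1,-1) 1) *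
    ((AddMonoidAlgebra.single (0,0) 1 + AddMonoidAlgebra.single (1,0) 1) *
    (AddMonoidAlgebra.single (0,0) 1 + AddMonoidAlgebra.single (0,1) 1)) := by
  simp only [chiY, mul_add, add_mul, AddMonoidAlgebra.single_mul_single, one_mul, mul_one,
    Prod.mk_add_mk]
  norm_num
  rw [show (AddMonoidAlgebra.single ((0:ℤ),(0:ℤ)) (2:ℤ)) = AddMonoidAlgebra.single (0,0) 1 + AddMonoidAlgebra.single (0,0) 1 by rw [← AddMonoidAlgebra.single_add]; norm_num]
  abel

theorem constTerm_chiY_eq_franel (n : ℕ) :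
    (chiY ^ n).coeff (0, 0) = ∑ k ∈ Finset.range (n + 1), (n.choose k : ℤ) ^ 3 := by
  have h : chiY ^ n = ∑ j ∈ range (n+1), ∑ i ∈ range (n+1), ∑ k ∈ range (n+1),
      AddMonoidAlgebra.single (k • ((-1:ℤ),(-1:ℤ)) + (i • ((1:ℤ),(0:ℤ)) + j • ((0:ℤ),(1:ℤ))))
        ((n.choose k : ℤ) * ((n.choose i : ℤ) * (n.choose j : ℤ))) := by
    rw [chiY_factor, mul_pow, mul_pow, pow_expand, pow_expand, pow_expand]
    simp only [Finset.mul_sum, Finset.sum_mul, AddMonoidAlgebra.single_mul_single]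
  have happ : ∀ (S : Finset ℕ) (F : ℕ → AddMonoidAlgebra ℤ (ℤ×ℤ)),
      (∑ i ∈ S, F i).coeff (0,0) = ∑ i ∈ S, (F i).coeff (0,0) := fun S F => by rw [AddMonoidAlgebra.coeff_sum]; exact Finsupp.finset_sum_apply _ _ _
  have hsing : ∀ (g : ℤ×ℤ) (c : ℤ), (AddMonoidAlgebra.single g c).coeff ((0:ℤ),(0:ℤ)) = if g = (0,0) then c else 0 :=
    fun g c => Finsupp.single_apply
  rw [h]
  simp only [happ, hsing]
  have hcond : ∀ i j k : ℕ, (k • ((-1:ℤ),(-1:ℤ)) + (i • ((1:ℤ),(0:ℤ)) + j • ((0:ℤ),(1:ℤ))) = ((0:ℤ),(0:ℤ)))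
      ↔ (k = i ∧ j = i) := by
    intro i j k
    simp only [Prod.smul_mk, Prod.mk_add_mk, Prod.mk.injEq, nsmul_eq_mul, mul_neg, mul_one,
      mul_zero, add_zero, zero_add]
    omega
  calc (∑ j ∈ range (n+1), ∑ i ∈ range (n+1), ∑ k ∈ range (n+1),
        if k • ((-1:ℤ),(-1:ℤ)) + (i • ((1:ℤ),(0:ℤ)) + j • ((0:ℤ),(1:ℤ))) = ((0:ℤ),(0:ℤ))
        then (n.choose k : ℤ) * ((n.choose i : ℤ) * (n.choose j : ℤ)) else 0)
      = ∑ j ∈ range (n+1), ∑ i ∈ range (n+1), ∑ k ∈ range (n+1),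
        if k = i then (if j = i then (n.choose k : ℤ) * ((n.choose i : ℤ) * (n.choose j : ℤ)) else 0) else 0 := by
        refine Finset.sum_congr rfl fun j _ => Finset.sum_congr rfl fun i _ => Finset.sum_congr rfl fun k _ => ?_
        simp only [hcond, ite_and]
    _ = ∑ j ∈ range (n+1), ∑ i ∈ range (n+1),
        if j = i then (n.choose i : ℤ) * ((n.choose i : ℤ) * (n.choose j : ℤ)) else 0 := by
        refine Finset.sum_congr rfl fun j _ => Finset.sum_congr rfl fun i hi => ?_
        rw [Finset.sum_ite_eq' (range (n+1)) i, if_pos hi]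
    _ = ∑ j ∈ range (n+1), (n.choose j : ℤ) * ((n.choose j : ℤ) * (n.choose j : ℤ)) := by
        refine Finset.sum_congr rfl fun j hj => ?_
        rw [Finset.sum_ite_eq (range (n+1)) j, if_pos hj]
    _ = ∑ k ∈ range (n+1), (n.choose k : ℤ) ^ 3 := by
        refine Finset.sum_congr rfl fun k _ => by ring
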